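/- arXiv:2110.00537 — 3 statements merged into one kernel-verified Lean document; each statement's English description precedes it below -/
import Mathlib

section
/- Let W₁, W₂, T be symmetric positive definite real n×n matrices. Then the matrix B = (W₂ - iT)^{-1} W₁ (W₁ + iT)^{-1} W₂ (viewed as a complex matrix) satisfies: every eigenvalue λ of B obeys |λ| ≤ sqrt( (1 + ‖Ŵ₂‖^{-2})^{-1} (1 + ‖Ŵ₁‖^{-2})^{-1} ) < 1, where Ŵⱼ = T^{-1/2} Wⱼ T^{-1/2}. -/
open scoped Matrix.Norms.L2Operator

/-- The positive semidefinite square root of a positive semidefinite matrix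
(the definition `Matrix.PosSemidef.sqrt` of the older Mathlib, since removed). -/
noncomputable def Matrix.PosSemidef.sqrt {n 𝕜 : Type*} [Fintype n] [RCLike 𝕜] [PartialOrder 𝕜]
    [DecidableEq n] {A : Matrix n n 𝕜} (hA : A.PosSemidef) : Matrix n n 𝕜 :=
  hA.1.eigenvectorUnitary.1 * Matrix.diagonal ((↑) ∘ (√·) ∘ hA.1.eigenvalues) *
  (star hA.1.eigenvectorUnitary : Matrix n n 𝕜)

/-- complexification of a real matrix -/
def Matrix.cplx {n : ℕ} (A : Matrix (Fin n) (Fin n) ℝ) : Matrix (Fin n) (Fin n) ℂ :=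
  A.map Complex.ofReal

/-- `Ŵ = T^{-1/2} W T^{-1/2}` -/
noncomputable def Matrix.hatW {n : ℕ} (T : Matrix (Fin n) (Fin n) ℝ) (hT : T.PosDef)
    (W : Matrix (Fin n) (Fin n) ℝ) : Matrix (Fin n) (Fin n) ℝ :=
  (hT.posSemidef.sqrt)⁻¹ * W * (hT.posSemidef.sqrt)⁻¹

namespace MyAux
open Matrix Complex ComplexOrder
variable {n : ℕ}

lemma cplx_eq (A : Matrix (Fin n) (Fin n) ℝ) :
    A.cplx = (Complex.ofRealHom.mapMatrix A) := rfl

lemma cplx_mul (A B : Matrix (Fin n) (Fin n) ℝ) : (A * B).cplx = A.cplx * B.cplx := by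
  simp [cplx_eq]

lemma cplx_hermitian (A : Matrix (Fin n) (Fin n) ℝ) (hA : A.IsSymm) :
    A.cplx.IsHermitian := by
  ext i j
  simp [Matrix.cplx, Matrix.conjTranspose_apply, Matrix.IsHermitian]
  exact_mod_cast congrFun (congrFun hA i) j

lemma cplx_det (A : Matrix (Fin n) (Fin n) ℝ) : A.cplx.det = (A.det : ℂ) := by
  rw [cplx_eq, ← RingHom.map_det]; rfl

lemma isUnit_add_smul (A : Matrix (Fin n) (Fin n) ℝ) (hA : A.IsSymm) (c : ℂ)
    (hc : c.im ≠ 0) : IsUnit (A.cplx + c • 1) := by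
  rw [Matrix.isUnit_iff_isUnit_det, isUnit_iff_ne_zero]
  intro hdet
  obtain ⟨v, hv0, hv⟩ := Matrix.exists_mulVec_eq_zero_iff.mpr hdet
  have h1 : star v ⬝ᵥ ((A.cplx + c • 1) *ᵥ v) = 0 := by rw [hv, dotProduct_zero]
  have h2 : star v ⬝ᵥ ((A.cplx + c • 1) *ᵥ v)
      = star v ⬝ᵥ (A.cplx *ᵥ v) + c * (star v ⬝ᵥ v) := by
    simp [Matrix.add_mulVec, dotProduct_add, Matrix.smul_mulVec,
      dotProduct_smul, smul_eq_mul]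
  -- star v ⬝ᵥ A.cplx *ᵥ v is real
  have h3 : (star v ⬝ᵥ (A.cplx *ᵥ v)).im = 0 := by
    have hH := (cplx_hermitian A hA)
    rw [← Complex.conj_eq_iff_im]
    calc (starRingEnd ℂ) (star v ⬝ᵥ (A.cplx *ᵥ v))
        = star (star v ⬝ᵥ (A.cplx *ᵥ v)) := rfl
      _ = star (A.cplx *ᵥ v) ⬝ᵥ v := by rw [Matrix.star_dotProduct, star_star]
      _ = (star v ᵥ* A.cplxᴴ) ⬝ᵥ v := by rw [Matrix.star_mulVec]
      _ = star v ⬝ᵥ (A.cplx *ᵥ v) := by rw [hH.eq, ← Matrix.dotProduct_mulVec]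
  have h4 : 0 < star v ⬝ᵥ v := Matrix.dotProduct_star_self_pos_iff.mpr hv0
  have h5 : (star v ⬝ᵥ v).im = 0 ∧ 0 < (star v ⬝ᵥ v).re := by
    rw [Complex.pos_iff] at h4
    exact ⟨h4.2.symm, h4.1⟩
  have h6 : star v ⬝ᵥ (A.cplx *ᵥ v) + c * (star v ⬝ᵥ v) = 0 := h2 ▸ h1
  have h7 := congrArg Complex.im h6
  simp only [Complex.add_im, Complex.mul_im, Complex.zero_im, h3, h5.1, mul_zero,
    add_zero, zero_add] at h7
  rcases mul_eq_zero.mp h7 with h | h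
  · exact hc h
  · exact absurd h (ne_of_gt h5.2)

lemma cnorm_sq (z : ℂ) : ‖z‖ ^ 2 = z.re ^ 2 + z.im ^ 2 := by
  rw [Complex.sq_norm, Complex.normSq_apply]; ring

lemma cplx_mulVec_norm_le (A : Matrix (Fin n) (Fin n) ℝ) (x : EuclideanSpace ℂ (Fin n)) :
    ‖(EuclideanSpace.equiv (Fin n) ℂ).symm (A.cplx *ᵥ x)‖ ≤ ‖A‖ * ‖x‖ := by
  classical
  set u : EuclideanSpace ℝ (Fin n) := (EuclideanSpace.equiv (Fin n) ℝ).symm (fun j => (x j).re)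
    with hu
  set v : EuclideanSpace ℝ (Fin n) := (EuclideanSpace.equiv (Fin n) ℝ).symm (fun j => (x j).im)
    with hv
  have hre : ∀ k, ((A.cplx *ᵥ (x : Fin n → ℂ)) k).re = (A *ᵥ (u : Fin n → ℝ)) k := by
    intro k
    simp [Matrix.mulVec, dotProduct, Matrix.cplx, Complex.re_sum, Complex.mul_re, hu]
  have him : ∀ k, ((A.cplx *ᵥ (x : Fin n → ℂ)) k).im = (A *ᵥ (v : Fin n → ℝ)) k := by
    intro k
    simp [Matrix.mulVec, dotProduct, Matrix.cplx, Complex.im_sum, Complex.mul_im, hv]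
  have hAx2 : ‖(EuclideanSpace.equiv (Fin n) ℂ).symm (A.cplx *ᵥ x)‖ ^ 2 =
      ‖(EuclideanSpace.equiv (Fin n) ℝ).symm (A *ᵥ u)‖ ^ 2 +
      ‖(EuclideanSpace.equiv (Fin n) ℝ).symm (A *ᵥ v)‖ ^ 2 := by
    rw [EuclideanSpace.norm_eq, EuclideanSpace.norm_eq, EuclideanSpace.norm_eq,
      Real.sq_sqrt (by positivity), Real.sq_sqrt (by positivity), Real.sq_sqrt (by positivity),
      ← Finset.sum_add_distrib]
    refine Finset.sum_congr rfl fun k _ => ?_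
    show ‖(A.cplx *ᵥ (x : Fin n → ℂ)) k‖ ^ 2
        = ‖(A *ᵥ (u : Fin n → ℝ)) k‖ ^ 2 + ‖(A *ᵥ (v : Fin n → ℝ)) k‖ ^ 2
    rw [cnorm_sq, hre k, him k, Real.norm_eq_abs, Real.norm_eq_abs, _root_.sq_abs, _root_.sq_abs]
  have hx2 : ‖x‖ ^ 2 = ‖u‖ ^ 2 + ‖v‖ ^ 2 := by
    rw [EuclideanSpace.norm_eq, EuclideanSpace.norm_eq, EuclideanSpace.norm_eq,
      Real.sq_sqrt (by positivity), Real.sq_sqrt (by positivity), Real.sq_sqrt (by positivity),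
      ← Finset.sum_add_distrib]
    refine Finset.sum_congr rfl fun k _ => ?_
    show ‖(x : Fin n → ℂ) k‖ ^ 2 = ‖(u : Fin n → ℝ) k‖ ^ 2 + ‖(v : Fin n → ℝ) k‖ ^ 2
    rw [cnorm_sq]
    simp [Real.norm_eq_abs, _root_.sq_abs, hu, hv]
  have h1 := Matrix.l2_opNorm_mulVec A u
  have h2 := Matrix.l2_opNorm_mulVec A v
  have key : ‖(EuclideanSpace.equiv (Fin n) ℂ).symm (A.cplx *ᵥ x)‖ ^ 2 ≤ (‖A‖ * ‖x‖) ^ 2 := by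
    rw [hAx2]
    have e1 : ‖(EuclideanSpace.equiv (Fin n) ℝ).symm (A *ᵥ u)‖ ^ 2 ≤ (‖A‖ * ‖u‖) ^ 2 := by
      nlinarith [norm_nonneg ((EuclideanSpace.equiv (Fin n) ℝ).symm (A *ᵥ u)),
        mul_nonneg (norm_nonneg A) (norm_nonneg u)]
    have e2 : ‖(EuclideanSpace.equiv (Fin n) ℝ).symm (A *ᵥ v)‖ ^ 2 ≤ (‖A‖ * ‖v‖) ^ 2 := by
      nlinarith [norm_nonneg ((EuclideanSpace.equiv (Fin n) ℝ).symm (A *ᵥ v)),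
        mul_nonneg (norm_nonneg A) (norm_nonneg v)]
    calc _ ≤ (‖A‖ * ‖u‖) ^ 2 + (‖A‖ * ‖v‖) ^ 2 := add_le_add e1 e2
      _ = ‖A‖ ^ 2 * (‖u‖ ^ 2 + ‖v‖ ^ 2) := by ring
      _ = (‖A‖ * ‖x‖) ^ 2 := by rw [← hx2]; ring
  nlinarith [norm_nonneg ((EuclideanSpace.equiv (Fin n) ℂ).symm (A.cplx *ᵥ x)),
    mul_nonneg (norm_nonneg A) (norm_nonneg x)]

lemma cplx_norm_le (A : Matrix (Fin n) (Fin n) ℝ) : ‖A.cplx‖ ≤ ‖A‖ := by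
  rw [Matrix.l2_opNorm_def]
  refine ContinuousLinearMap.opNorm_le_bound _ (norm_nonneg A) fun x => ?_
  exact cplx_mulVec_norm_le A x

lemma key_norm (A : Matrix (Fin n) (Fin n) ℝ) (hA : A.IsSymm) (hA0 : A ≠ 0)
    (ε : ℂ) (hεre : ε.re = 0) (hε1 : ‖ε‖ = 1) :
    ‖A.cplx * (A.cplx + ε • 1)⁻¹‖ ≤ Real.sqrt ((1 + (‖A‖ ^ 2)⁻¹)⁻¹) := by
  classical
  have hεim : ε.im ≠ 0 := by
    intro h
    have := cnorm_sq ε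
    rw [hε1, hεre, h] at this
    norm_num at this
  have hunit : IsUnit (A.cplx + ε • 1) := isUnit_add_smul A hA ε hεim
  have hdet : IsUnit (A.cplx + ε • 1).det := (Matrix.isUnit_iff_isUnit_det _).mp hunit
  have ha : 0 < ‖A‖ := norm_pos_iff.mpr hA0
  set a := ‖A‖ with ha_def
  set c := (1 + (a ^ 2)⁻¹)⁻¹ with hc_def
  have hc : 0 ≤ c := by positivity
  rw [Matrix.l2_opNorm_def]
  refine ContinuousLinearMap.opNorm_le_bound _ (Real.sqrt_nonneg _) fun x => ?_
  show ‖(EuclideanSpace.equiv (Fin n) ℂ).symm ((A.cplx * (A.cplx + ε • 1)⁻¹) *ᵥ x)‖ ≤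
    Real.sqrt c * ‖x‖
  set y' : Fin n → ℂ := (A.cplx + ε • 1)⁻¹ *ᵥ x with hy'
  set y : EuclideanSpace ℂ (Fin n) := (EuclideanSpace.equiv (Fin n) ℂ).symm y' with hy
  set w' : Fin n → ℂ := A.cplx *ᵥ y' with hw'
  set w : EuclideanSpace ℂ (Fin n) := (EuclideanSpace.equiv (Fin n) ℂ).symm w' with hw
  have hvec : (A.cplx * (A.cplx + ε • 1)⁻¹) *ᵥ (x : Fin n → ℂ) = w' :=
    (Matrix.mulVec_mulVec _ _ _).symm
  rw [hvec]
  have h1 : (A.cplx + ε • 1) *ᵥ y' = x := by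
    rw [hy', Matrix.mulVec_mulVec, Matrix.mul_nonsing_inv _ hdet, Matrix.one_mulVec]
  have h2 : (x : Fin n → ℂ) = w' + ε • y' := by
    conv_lhs => rw [← h1]
    rw [Matrix.add_mulVec, Matrix.smul_mulVec, Matrix.one_mulVec, hw']
  have hxwy : x = w + ε • y := WithLp.ofLp_injective 2 h2
  -- the cross term is real times i, so vanishes in re
  have him : (inner ℂ w y : ℂ).im = 0 := by
    have hsymm := Matrix.isHermitian_iff_isSymmetric.mp (cplx_hermitian A hA)
    have hwT : w = Matrix.toEuclideanLin A.cplx y := rfl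
    have hself : (starRingEnd ℂ) (inner ℂ w y : ℂ) = (inner ℂ w y : ℂ) := by
      calc (starRingEnd ℂ) (inner ℂ w y : ℂ) = (inner ℂ y w : ℂ) := by rw [inner_conj_symm]
        _ = (inner ℂ y (Matrix.toEuclideanLin A.cplx y) : ℂ) := by rw [← hwT]
        _ = (inner ℂ (Matrix.toEuclideanLin A.cplx y) y : ℂ) := (hsymm y y).symm
        _ = (inner ℂ w y : ℂ) := by rw [← hwT]
    exact Complex.conj_eq_iff_im.mp hself
  have hcross : RCLike.re (inner ℂ w (ε • y) : ℂ) = 0 := by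
    rw [inner_smul_right]
    simp only [RCLike.re_to_complex, Complex.mul_re, hεre, him, zero_mul, mul_zero, sub_zero,
      zero_sub, neg_eq_zero]
  have hlen : ‖x‖ ^ 2 = ‖w‖ ^ 2 + ‖y‖ ^ 2 := by
    rw [hxwy, @norm_add_sq ℂ _ _ _ _ w (ε • y), hcross, norm_smul, hε1]
    ring
  have hwy : ‖w‖ ≤ a * ‖y‖ := cplx_mulVec_norm_le A y
  have hsq : ‖w‖ ^ 2 ≤ c * ‖x‖ ^ 2 := by
    have hcval : c = a ^ 2 / (1 + a ^ 2) := by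
      rw [hc_def]
      field_simp
      ring
    rw [hlen, hcval, div_mul_eq_mul_div, le_div_iff₀ (by positivity)]
    nlinarith [hwy, norm_nonneg w, norm_nonneg y, mul_nonneg (le_of_lt ha) (norm_nonneg y)]
  calc ‖w‖ = Real.sqrt (‖w‖ ^ 2) := (Real.sqrt_sq (norm_nonneg w)).symm
    _ ≤ Real.sqrt (c * ‖x‖ ^ 2) := Real.sqrt_le_sqrt hsq
    _ = Real.sqrt c * ‖x‖ := by rw [Real.sqrt_mul hc, Real.sqrt_sq (norm_nonneg x)]

lemma spectrum_conj (M C : Matrix (Fin n) (Fin n) ℂ) (hM : IsUnit M) :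
    spectrum ℂ (M⁻¹ * C * M) = spectrum ℂ C := by
  have hu : (hM.unit : Matrix (Fin n) (Fin n) ℂ) = M := hM.unit_spec
  have hu' : ((hM.unit⁻¹ : (Matrix (Fin n) (Fin n) ℂ)ˣ) : Matrix (Fin n) (Fin n) ℂ) = M⁻¹ := by
    rw [Matrix.coe_units_inv, hu]
  calc spectrum ℂ (M⁻¹ * C * M)
      = spectrum ℂ ((hM.unit⁻¹ : (Matrix (Fin n) (Fin n) ℂ)ˣ) * C * hM.unit) := by
        rw [hu', hu]
    _ = spectrum ℂ C := spectrum.units_conjugate' 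

end MyAux

/-- eigenvalue bound for the Method I iteration matrix
`B = (W₂ - iT)⁻¹ W₁ (W₁ + iT)⁻¹ W₂`. -/
theorem stmt_1 {n : ℕ} (hn : 0 < n) (W₁ W₂ T : Matrix (Fin n) (Fin n) ℝ)
    (hW₁ : W₁.PosDef) (hW₂ : W₂.PosDef) (hT : T.PosDef) :
    (∀ lam ∈ spectrum ℂ
        ((W₂.cplx - Complex.I • T.cplx)⁻¹ * W₁.cplx *
          (W₁.cplx + Complex.I • T.cplx)⁻¹ * W₂.cplx),
      ‖lam‖ ≤ Real.sqrt ((1 + (‖T.hatW hT W₂‖ ^ 2)⁻¹)⁻¹ *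
        (1 + (‖T.hatW hT W₁‖ ^ 2)⁻¹)⁻¹)) ∧
    Real.sqrt ((1 + (‖T.hatW hT W₂‖ ^ 2)⁻¹)⁻¹ * (1 + (‖T.hatW hT W₁‖ ^ 2)⁻¹)⁻¹) < 1 := by
  classical
  haveI : Nonempty (Fin n) := ⟨⟨0, hn⟩⟩
  haveI : CompleteSpace (Matrix (Fin n) (Fin n) ℂ) := FiniteDimensional.complete ℂ _
  haveI : NormOneClass (Matrix (Fin n) (Fin n) ℂ) :=
    ⟨by rw [Matrix.cstar_norm_def, map_one]; exact ContinuousLinearMap.norm_id⟩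
  -- the square root of T
  set s := hT.posSemidef.sqrt with hs
  have hs_herm : s.IsHermitian := by
    rw [hs, Matrix.PosSemidef.sqrt, Matrix.star_eq_conjTranspose]
    exact Matrix.isHermitian_mul_mul_conjTranspose _ (Matrix.isHermitian_diagonal _)
  have hs_symm : s.IsSymm := by
    ext i j
    simpa using congrFun (congrFun hs_herm i) j
  have hss : s * s = T := by
    have hU : (star hT.posSemidef.1.eigenvectorUnitary : Matrix (Fin n) (Fin n) ℝ) *
        (hT.posSemidef.1.eigenvectorUnitary : Matrix (Fin n) (Fin n) ℝ) = 1 :=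
      Unitary.star_mul_self_of_mem hT.posSemidef.1.eigenvectorUnitary.2
    have hD : Matrix.diagonal ((RCLike.ofReal : ℝ → ℝ) ∘ (√·) ∘ hT.posSemidef.1.eigenvalues) *
        Matrix.diagonal ((RCLike.ofReal : ℝ → ℝ) ∘ (√·) ∘ hT.posSemidef.1.eigenvalues) =
        Matrix.diagonal (RCLike.ofReal ∘ hT.posSemidef.1.eigenvalues) := by
      rw [Matrix.diagonal_mul_diagonal]
      congr 1
      funext i
      simp [Real.mul_self_sqrt (hT.posSemidef.eigenvalues_nonneg i)]
    conv_rhs => rw [hT.posSemidef.1.spectral_theorem, Unitary.conjStarAlgAut_apply]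
    rw [hs, Matrix.PosSemidef.sqrt]
    calc _ = (hT.posSemidef.1.eigenvectorUnitary : Matrix (Fin n) (Fin n) ℝ) *
          (Matrix.diagonal ((RCLike.ofReal : ℝ → ℝ) ∘ (√·) ∘ hT.posSemidef.1.eigenvalues) *
          ((star hT.posSemidef.1.eigenvectorUnitary : Matrix (Fin n) (Fin n) ℝ) *
          (hT.posSemidef.1.eigenvectorUnitary : Matrix (Fin n) (Fin n) ℝ)) *
          Matrix.diagonal ((RCLike.ofReal : ℝ → ℝ) ∘ (√·) ∘ hT.posSemidef.1.eigenvalues)) *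
          (star hT.posSemidef.1.eigenvectorUnitary : Matrix (Fin n) (Fin n) ℝ) := by
            simp only [Matrix.mul_assoc]
      _ = _ := by rw [hU, Matrix.mul_one, hD]
  have hdet_s : IsUnit s.det := by
    rw [isUnit_iff_ne_zero]
    intro h0
    have : T.det = 0 := by rw [← hss, Matrix.det_mul, h0, mul_zero]
    exact (ne_of_gt hT.det_pos) this
  -- real factorization
  have hhat_def : ∀ W : Matrix (Fin n) (Fin n) ℝ, T.hatW hT W = s⁻¹ * W * s⁻¹ :=
    fun W => rfl
  have hfact : ∀ W : Matrix (Fin n) (Fin n) ℝ, s * (T.hatW hT W) * s = W := by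
    intro W
    rw [hhat_def]
    simp only [← Matrix.mul_assoc]
    rw [Matrix.mul_nonsing_inv _ hdet_s, Matrix.one_mul, Matrix.mul_assoc,
      Matrix.nonsing_inv_mul _ hdet_s, Matrix.mul_one]
  -- symmetry and nonvanishing of the hat matrices
  have hhat_symm : ∀ W : Matrix (Fin n) (Fin n) ℝ, W.IsSymm → (T.hatW hT W).IsSymm := by
    intro W hW
    show Matrix.transpose (T.hatW hT W) = T.hatW hT W
    rw [hhat_def, Matrix.transpose_mul, Matrix.transpose_mul, Matrix.transpose_nonsing_inv,
      hs_symm.eq, hW.eq, Matrix.mul_assoc]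
  have hhat_ne : ∀ W : Matrix (Fin n) (Fin n) ℝ, W.PosDef → T.hatW hT W ≠ 0 := by
    intro W hW h0
    have hdet : (T.hatW hT W).det = s⁻¹.det * W.det * s⁻¹.det := by
      rw [hhat_def, Matrix.det_mul, Matrix.det_mul]
    have hdet_inv : s⁻¹.det ≠ 0 := by
      rw [Matrix.det_nonsing_inv, Ring.inverse_eq_inv']
      exact inv_ne_zero (isUnit_iff_ne_zero.mp hdet_s)
    rw [h0, Matrix.det_zero] at hdet
    exact hdet_inv (by
      rcases mul_eq_zero.mp hdet.symm with h | h
      · rcases mul_eq_zero.mp h with h' | h'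
        · exact h'
        · exact absurd h' (ne_of_gt hW.det_pos)
      · exact h)
  -- complexification
  set S := s.cplx with hS
  have hS_det : IsUnit S.det := by
    rw [hS, MyAux.cplx_det, isUnit_iff_ne_zero, ne_eq, Complex.ofReal_eq_zero]
    exact isUnit_iff_ne_zero.mp hdet_s
  have hS_unit : IsUnit S := (Matrix.isUnit_iff_isUnit_det S).mpr hS_det
  have hSS : S * S = T.cplx := by rw [hS, ← MyAux.cplx_mul, hss]
  have hWfact : ∀ W : Matrix (Fin n) (Fin n) ℝ, S * (T.hatW hT W).cplx * S = W.cplx := by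
    intro W
    rw [hS, ← MyAux.cplx_mul, ← MyAux.cplx_mul, hfact]
  -- symmetry of W₁ W₂
  have hW₁symm : W₁.IsSymm := by
    ext i j; simpa using congrFun (congrFun hW₁.isHermitian i) j
  have hW₂symm : W₂.IsSymm := by
    ext i j; simpa using congrFun (congrFun hW₂.isHermitian i) j
  set H₁ := (T.hatW hT W₁).cplx with hH₁
  set H₂ := (T.hatW hT W₂).cplx with hH₂
  set X₁ := H₁ + Complex.I • 1 with hX₁
  set X₂ := H₂ - Complex.I • 1 with hX₂
  have hX₂eq : X₂ = H₂ + (-Complex.I) • 1 := by rw [hX₂, sub_eq_add_neg, neg_smul]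
  have hX₁_unit : IsUnit X₁ :=
    MyAux.isUnit_add_smul _ (hhat_symm W₁ hW₁symm) Complex.I (by simp)
  have hX₂_unit : IsUnit X₂ := by
    rw [hX₂eq]
    exact MyAux.isUnit_add_smul _ (hhat_symm W₂ hW₂symm) (-Complex.I) (by simp)
  have hX₁det : IsUnit X₁.det := (Matrix.isUnit_iff_isUnit_det _).mp hX₁_unit
  have hX₂det : IsUnit X₂.det := (Matrix.isUnit_iff_isUnit_det _).mp hX₂_unit
  -- factorizations over ℂ
  have hA2 : S * X₂ * S = W₂.cplx - Complex.I • T.cplx := by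
    rw [hX₂, Matrix.mul_sub, Matrix.sub_mul, mul_smul_comm, smul_mul_assoc, Matrix.mul_one,
      hSS, hWfact]
  have hA1 : S * X₁ * S = W₁.cplx + Complex.I • T.cplx := by
    rw [hX₁, Matrix.mul_add, Matrix.add_mul, mul_smul_comm, smul_mul_assoc, Matrix.mul_one,
      hSS, hWfact]
  have hinv2 : (S * X₂ * S)⁻¹ = S⁻¹ * X₂⁻¹ * S⁻¹ := by
    rw [Matrix.mul_inv_rev, Matrix.mul_inv_rev, Matrix.mul_assoc]
  have hinv1 : (S * X₁ * S)⁻¹ = S⁻¹ * X₁⁻¹ * S⁻¹ := by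
    rw [Matrix.mul_inv_rev, Matrix.mul_inv_rev, Matrix.mul_assoc]
  have c1 : ∀ B : Matrix (Fin n) (Fin n) ℂ, S⁻¹ * (S * B) = B :=
    fun B => Matrix.nonsing_inv_mul_cancel_left S B hS_det
  have c2 : ∀ B : Matrix (Fin n) (Fin n) ℂ, S * (S⁻¹ * B) = B :=
    fun B => Matrix.mul_nonsing_inv_cancel_left S B hS_det
  have hBfact : (W₂.cplx - Complex.I • T.cplx)⁻¹ * W₁.cplx *
      (W₁.cplx + Complex.I • T.cplx)⁻¹ * W₂.cplx
      = S⁻¹ * (X₂⁻¹ * (H₁ * (X₁⁻¹ * (H₂ * S)))) := by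
    rw [← hA2, ← hA1, ← hWfact W₁, ← hWfact W₂, hinv2, hinv1]
    simp only [Matrix.mul_assoc, c1, c2]
    rfl
  -- spectra agree after two conjugations
  set D := X₂⁻¹ * (H₁ * (X₁⁻¹ * H₂)) with hD
  set E := H₁ * (X₁⁻¹ * (H₂ * X₂⁻¹)) with hE
  have hspec1 : spectrum ℂ (S⁻¹ * (X₂⁻¹ * (H₁ * (X₁⁻¹ * (H₂ * S))))) = spectrum ℂ D := by
    have h1 : S⁻¹ * (X₂⁻¹ * (H₁ * (X₁⁻¹ * (H₂ * S)))) = S⁻¹ * D * S := by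
      rw [hD]; simp only [Matrix.mul_assoc]
    rw [h1, MyAux.spectrum_conj S D hS_unit]
  have hspec2 : spectrum ℂ D = spectrum ℂ E := by
    have h1 : D = X₂⁻¹ * E * X₂ := by
      rw [hD, hE]
      simp only [Matrix.mul_assoc, Matrix.nonsing_inv_mul_cancel_right _ _ hX₂det]
      try rw [Matrix.nonsing_inv_mul _ hX₂det]
      try simp only [Matrix.mul_one]
    rw [h1, MyAux.spectrum_conj X₂ E hX₂_unit]
  -- the two norm bounds
  have hb1 : ‖H₁ * X₁⁻¹‖ ≤ Real.sqrt ((1 + (‖T.hatW hT W₁‖ ^ 2)⁻¹)⁻¹) := by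
    rw [hH₁, hX₁]
    exact MyAux.key_norm _ (hhat_symm W₁ hW₁symm) (hhat_ne W₁ hW₁) Complex.I (by simp) (by simp)
  have hb2 : ‖H₂ * X₂⁻¹‖ ≤ Real.sqrt ((1 + (‖T.hatW hT W₂‖ ^ 2)⁻¹)⁻¹) := by
    rw [hH₂, hX₂eq]
    exact MyAux.key_norm _ (hhat_symm W₂ hW₂symm) (hhat_ne W₂ hW₂) (-Complex.I) (by simp)
      (by simp)
  have hq₁ : (0:ℝ) < ‖T.hatW hT W₁‖ := norm_pos_iff.mpr (hhat_ne W₁ hW₁)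
  have hq₂ : (0:ℝ) < ‖T.hatW hT W₂‖ := norm_pos_iff.mpr (hhat_ne W₂ hW₂)
  constructor
  · intro lam hlam
    rw [hBfact] at hlam
    rw [hspec1, hspec2] at hlam
    have h1 : ‖lam‖ ≤ ‖E‖ := spectrum.norm_le_norm_of_mem hlam
    have h2 : ‖E‖ ≤ ‖H₁ * X₁⁻¹‖ * ‖H₂ * X₂⁻¹‖ := by
      have : E = (H₁ * X₁⁻¹) * (H₂ * X₂⁻¹) := by rw [hE]; simp only [Matrix.mul_assoc]
      rw [this]
      exact Matrix.l2_opNorm_mul _ _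
    have h3 : ‖H₁ * X₁⁻¹‖ * ‖H₂ * X₂⁻¹‖ ≤
        Real.sqrt ((1 + (‖T.hatW hT W₁‖ ^ 2)⁻¹)⁻¹) *
        Real.sqrt ((1 + (‖T.hatW hT W₂‖ ^ 2)⁻¹)⁻¹) :=
      mul_le_mul hb1 hb2 (norm_nonneg _) (Real.sqrt_nonneg _)
    have h4 : Real.sqrt ((1 + (‖T.hatW hT W₁‖ ^ 2)⁻¹)⁻¹) *
        Real.sqrt ((1 + (‖T.hatW hT W₂‖ ^ 2)⁻¹)⁻¹)
        = Real.sqrt ((1 + (‖T.hatW hT W₂‖ ^ 2)⁻¹)⁻¹ * (1 + (‖T.hatW hT W₁‖ ^ 2)⁻¹)⁻¹) := by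
      rw [← Real.sqrt_mul (by positivity), mul_comm]
    linarith [h1, h2.trans h3]
  · have s₁ : (0:ℝ) < (‖T.hatW hT W₁‖ ^ 2)⁻¹ := inv_pos.mpr (pow_pos hq₁ 2)
    have s₂ : (0:ℝ) < (‖T.hatW hT W₂‖ ^ 2)⁻¹ := inv_pos.mpr (pow_pos hq₂ 2)
    have h0₁ : (0:ℝ) < 1 + (‖T.hatW hT W₁‖ ^ 2)⁻¹ := by linarith
    have h0₂ : (0:ℝ) < 1 + (‖T.hatW hT W₂‖ ^ 2)⁻¹ := by linarith
    have e₁ : (1 + (‖T.hatW hT W₁‖ ^ 2)⁻¹)⁻¹ < 1 := by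
      rw [← one_div, div_lt_one h0₁]; linarith
    have e₂ : (1 + (‖T.hatW hT W₂‖ ^ 2)⁻¹)⁻¹ < 1 := by
      rw [← one_div, div_lt_one h0₂]; linarith
    have e₁' : (0:ℝ) < (1 + (‖T.hatW hT W₁‖ ^ 2)⁻¹)⁻¹ := inv_pos.mpr h0₁
    have e₂' : (0:ℝ) < (1 + (‖T.hatW hT W₂‖ ^ 2)⁻¹)⁻¹ := inv_pos.mpr h0₂
    have hlt : (1 + (‖T.hatW hT W₂‖ ^ 2)⁻¹)⁻¹ * (1 + (‖T.hatW hT W₁‖ ^ 2)⁻¹)⁻¹ < 1 := by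
      nlinarith
    calc Real.sqrt ((1 + (‖T.hatW hT W₂‖ ^ 2)⁻¹)⁻¹ * (1 + (‖T.hatW hT W₁‖ ^ 2)⁻¹)⁻¹)
        < Real.sqrt 1 := Real.sqrt_lt_sqrt (le_of_lt (mul_pos e₂' e₁')) hlt
      _ = 1 := Real.sqrt_one
end

section
/- Let Ŵ be a Hermitian positive definite complex n×n matrix and α ≥ 1. Then the matrix C = ((α-1)I - iŴ)(αI + iŴ)^{-1} is normal and has spectral norm ‖C‖ = max over eigenvalues μ of Ŵ of sqrt( ((α-1)² + μ²)/(α² + μ²) ) ≤ sqrt( ((α-1)² + ‖Ŵ‖²)/(α² + ‖Ŵ‖²) ). -/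
open scoped Matrix.Norms.L2Operator ComplexOrder
open Matrix Complex

lemma mulVec_diag {n : ℕ} (d x : Fin n → ℂ) :
    Matrix.diagonal d *ᵥ x = fun i => d i * x i := by
  ext i
  simp [Matrix.mulVec, Matrix.diagonal, dotProduct]

lemma norm_diag {n : ℕ} (d : Fin n → ℂ) :
    ‖(Matrix.diagonal d : Matrix (Fin n) (Fin n) ℂ)‖ = ⨆ i, ‖d i‖ := by
  rcases Nat.eq_zero_or_pos n with h | h
  · subst h
    rw [Real.iSup_of_isEmpty, show (Matrix.diagonal d : Matrix (Fin 0) (Fin 0) ℂ) = 0 from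
      Subsingleton.elim _ _, norm_zero]
  have : Nonempty (Fin n) := Fin.pos_iff_nonempty.mp h
  set M := ⨆ i, ‖d i‖ with hM
  have hle : ∀ i, ‖d i‖ ≤ M :=
    fun i => le_ciSup (f := fun i => ‖d i‖) (Set.Finite.bddAbove (Set.finite_range _)) i
  have hM0 : 0 ≤ M := le_trans (norm_nonneg _) (hle (Classical.arbitrary _))
  apply le_antisymm
  · rw [Matrix.l2_opNorm_def]
    apply ContinuousLinearMap.opNorm_le_bound _ hM0
    intro x
    rw [LinearEquiv.trans_apply, LinearMap.coe_toContinuousLinearMap']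
    have hx : ((Matrix.diagonal d).toEuclideanLin x : EuclideanSpace ℂ (Fin n))
        = (WithLp.equiv 2 _).symm (Matrix.diagonal d *ᵥ (WithLp.equiv 2 _ x)) := by
      simp [Matrix.toEuclideanLin_apply]
    rw [hx]
    rw [EuclideanSpace.norm_eq, EuclideanSpace.norm_eq]
    rw [show M * Real.sqrt (∑ i, ‖x i‖ ^ 2) = Real.sqrt (M ^ 2 * ∑ i, ‖x i‖ ^ 2) by
      rw [Real.sqrt_mul (sq_nonneg M), Real.sqrt_sq hM0]]
    apply Real.sqrt_le_sqrt
    rw [Finset.mul_sum]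
    apply Finset.sum_le_sum
    intro i _
    have : ‖(WithLp.equiv 2 _).symm (Matrix.diagonal d *ᵥ (WithLp.equiv 2 _ x)) i‖
        = ‖d i * x i‖ := by rw [mulVec_diag]; rfl
    rw [this, norm_mul, mul_pow]
    exact mul_le_mul_of_nonneg_right (pow_le_pow_left₀ (norm_nonneg _) (hle i) 2)
      (sq_nonneg _)
  · apply ciSup_le
    intro j
    have h1 := Matrix.l2_opNorm_mulVec (Matrix.diagonal d) (EuclideanSpace.single j 1)
    have h2 : Matrix.diagonal d *ᵥ (EuclideanSpace.single j (1:ℂ)) = Pi.single j (d j) := by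
      have : ((EuclideanSpace.single j (1:ℂ)) : Fin n → ℂ) = Pi.single j 1 := rfl
      rw [this, Matrix.diagonal_mulVec_single, mul_one]
    rw [h2, EuclideanSpace.norm_single, norm_one, mul_one] at h1
    calc ‖d j‖ = ‖(EuclideanSpace.single j (d j) : EuclideanSpace ℂ (Fin n))‖ :=
          (EuclideanSpace.norm_single _ _).symm
      _ ≤ _ := by convert h1 using 2; rfl

lemma conj_comb {n : ℕ} (V W A : Matrix (Fin n) (Fin n) ℂ) (hVW : V * W = 1) (a b : ℂ) :
    a • (1 : Matrix (Fin n) (Fin n) ℂ) + b • (V * A * W) = V * (a • 1 + b • A) * W := by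
  rw [Matrix.mul_add, Matrix.add_mul, Matrix.mul_smul, Matrix.smul_mul, mul_one,
    Matrix.mul_smul, Matrix.smul_mul, hVW]

lemma conj_mul' {n : ℕ} (V W A B : Matrix (Fin n) (Fin n) ℂ) (hWV : W * V = 1) :
    (V * A * W) * (V * B * W) = V * (A * B) * W := by
  calc (V * A * W) * (V * B * W) = V * A * (W * V) * B * W := by
        simp only [Matrix.mul_assoc]
    _ = V * (A * B) * W := by rw [hWV, Matrix.mul_one]; simp only [Matrix.mul_assoc]

lemma smul_one_add_smul_diag {n : ℕ} (c d : ℂ) (v : Fin n → ℂ) :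
    c • (1 : Matrix (Fin n) (Fin n) ℂ) + d • Matrix.diagonal v
      = Matrix.diagonal (fun i => c + d * v i) := by
  ext i j
  by_cases h : i = j <;> simp [h, Matrix.one_apply, Matrix.diagonal]

/-- for `Ŵ` Hermitian positive definite and `α ≥ 1`, the matrix
`C = ((α-1)I - iŴ)(αI + iŴ)⁻¹` is normal, its spectral norm is the maximum of
`√(((α-1)² + μ²)/(α² + μ²))` over the eigenvalues `μ` of `Ŵ`, and this is bounded
by `√(((α-1)² + ‖Ŵ‖²)/(α² + ‖Ŵ‖²))`. -/
theorem stmt_10 {n : ℕ} (What : Matrix (Fin n) (Fin n) ℂ) (hW : What.PosDef)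
    (α : ℝ) (hα : 1 ≤ α)
    (C : Matrix (Fin n) (Fin n) ℂ)
    (hC : C = (((α : ℂ) - 1) • (1 : Matrix (Fin n) (Fin n) ℂ) - Complex.I • What) *
      ((α : ℂ) • (1 : Matrix (Fin n) (Fin n) ℂ) + Complex.I • What)⁻¹) :
    IsStarNormal C ∧
    ‖C‖ = ⨆ i : Fin n, Real.sqrt
      (((α - 1) ^ 2 + hW.1.eigenvalues i ^ 2) / (α ^ 2 + hW.1.eigenvalues i ^ 2)) ∧
    ‖C‖ ≤ Real.sqrt (((α - 1) ^ 2 + ‖What‖ ^ 2) / (α ^ 2 + ‖What‖ ^ 2)) := by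
  have hH := hW.1
  set μ : Fin n → ℝ := hH.eigenvalues with hμdef
  set V : Matrix (Fin n) (Fin n) ℂ := (hH.eigenvectorUnitary : Matrix (Fin n) (Fin n) ℂ) with hVdef
  have hVmem : V ∈ unitary (Matrix (Fin n) (Fin n) ℂ) := hH.eigenvectorUnitary.2
  have hVW : V * star V = 1 := Unitary.mul_star_self_of_mem hVmem
  have hWV : star V * V = 1 := Unitary.star_mul_self_of_mem hVmem
  have hspec : What = V * Matrix.diagonal (fun i => (μ i : ℂ)) * star V := by
    exact hH.spectral_theorem
  -- eigenvalues positive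
  have hμpos : ∀ i, 0 < μ i := fun i => hW.eigenvalues_pos i
  -- the diagonal pieces
  set a : Fin n → ℂ := fun i => ((α : ℂ) - 1) - Complex.I * μ i with hadef
  set b : Fin n → ℂ := fun i => (α : ℂ) + Complex.I * μ i with hbdef
  have hbne : ∀ i, b i ≠ 0 := by
    intro i h
    have := congrArg Complex.re h
    simp [hbdef] at this
    linarith
  have hnum : (((α : ℂ) - 1) • (1 : Matrix (Fin n) (Fin n) ℂ) - Complex.I • What)
      = V * Matrix.diagonal a * star V := by
    rw [sub_eq_add_neg, ← neg_smul, hspec, conj_comb _ _ _ hVW, smul_one_add_smul_diag,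
      show (fun i => ((α:ℂ) - 1) + -Complex.I * (μ i : ℂ)) = a from
        funext fun i => by simp only [hadef]; ring]
  have hden : ((α : ℂ) • (1 : Matrix (Fin n) (Fin n) ℂ) + Complex.I • What)
      = V * Matrix.diagonal b * star V := by
    rw [hspec, conj_comb _ _ _ hVW, smul_one_add_smul_diag]
  have hinv : ((α : ℂ) • (1 : Matrix (Fin n) (Fin n) ℂ) + Complex.I • What)⁻¹
      = V * Matrix.diagonal (fun i => (b i)⁻¹) * star V := by
    apply Matrix.inv_eq_right_inv
    rw [hden, conj_mul' _ _ _ _ hWV, Matrix.diagonal_mul_diagonal]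
    have : (fun i => b i * (b i)⁻¹) = fun _ : Fin n => (1 : ℂ) := by
      funext i; exact mul_inv_cancel₀ (hbne i)
    rw [this, Matrix.diagonal_one, Matrix.mul_one, hVW]
  set g : Fin n → ℂ := fun i => a i * (b i)⁻¹ with hgdef
  have hCd : C = V * Matrix.diagonal g * star V := by
    rw [hC, hnum, hinv, conj_mul' _ _ _ _ hWV, Matrix.diagonal_mul_diagonal]
  -- star of C
  have hCstar : star C = V * Matrix.diagonal (fun i => star (g i)) * star V := by
    rw [hCd]
    simp only [Matrix.star_eq_conjTranspose, Matrix.conjTranspose_mul,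
      Matrix.conjTranspose_conjTranspose, Matrix.diagonal_conjTranspose]
    rw [← Matrix.mul_assoc]
    rfl
  have hnormal : IsStarNormal C := by
    constructor
    show star C * C = C * star C
    rw [hCstar, hCd, conj_mul' _ _ _ _ hWV, conj_mul' _ _ _ _ hWV,
      Matrix.diagonal_mul_diagonal, Matrix.diagonal_mul_diagonal,
      show (fun i => star (g i) * g i) = (fun i => g i * star (g i)) from
        funext fun i => mul_comm _ _]
  -- norm of g i
  have hga : ∀ i, ‖g i‖ = Real.sqrt (((α - 1) ^ 2 + μ i ^ 2) / (α ^ 2 + μ i ^ 2)) := by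
    intro i
    have h1 : ‖a i‖ = Real.sqrt ((α - 1) ^ 2 + μ i ^ 2) := by
      rw [show a i = Complex.mk (α - 1) (-(μ i)) by
        apply Complex.ext <;> simp [hadef]]
      rw [Complex.norm_def, Complex.normSq_mk]
      ring_nf
    have h2 : ‖b i‖ = Real.sqrt (α ^ 2 + μ i ^ 2) := by
      rw [show b i = Complex.mk α (μ i) by apply Complex.ext <;> simp [hbdef]]
      rw [Complex.norm_def, Complex.normSq_mk]
      ring_nf
    rw [hgdef]
    simp only
    rw [norm_mul, norm_inv, h1, h2, Real.sqrt_div (by positivity)]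
    ring
  -- norm of C
  have hnormC : ‖C‖ = ⨆ i, ‖g i‖ := by
    rw [hCd, Matrix.mul_assoc, CStarRing.norm_mem_unitary_mul _ hVmem,
      CStarRing.norm_mul_mem_unitary _ (Unitary.star_mem hVmem), norm_diag]
  refine ⟨hnormal, ?_, ?_⟩
  · rw [hnormC]
    congr 1
    funext i
    exact hga i
  · -- bound
    rcases Nat.eq_zero_or_pos n with h | h
    · have : IsEmpty (Fin n) := by subst h; infer_instance
      rw [hnormC, Real.iSup_of_isEmpty]
      positivity
    have : Nonempty (Fin n) := Fin.pos_iff_nonempty.mp h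
    -- each eigenvalue bounded by ‖What‖
    have hWnorm : ‖What‖ = ⨆ i, |μ i| := by
      conv_lhs => rw [hspec]
      rw [Matrix.mul_assoc, CStarRing.norm_mem_unitary_mul _ hVmem,
        CStarRing.norm_mul_mem_unitary _ (Unitary.star_mem hVmem), norm_diag]
      congr 1
      funext i
      simp
    have hμle : ∀ i, μ i ≤ ‖What‖ := by
      intro i
      rw [hWnorm]
      exact le_trans (le_abs_self _)
        (le_ciSup (f := fun i => |μ i|) (Set.Finite.bddAbove (Set.finite_range _)) i)
    rw [hnormC]
    apply ciSup_le
    intro i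
    rw [hga i]
    apply Real.sqrt_le_sqrt
    have hμi := hμpos i
    have hμW := hμle i
    have hd1 : (0:ℝ) < α ^ 2 + μ i ^ 2 := by positivity
    have hd2 : (0:ℝ) < α ^ 2 + ‖What‖ ^ 2 := by positivity
    rw [div_le_div_iff₀ hd1 hd2]
    nlinarith [sq_nonneg (‖What‖ - μ i), sq_nonneg (‖What‖ + μ i),
      mul_nonneg (sub_nonneg.2 hμW) (by positivity : (0:ℝ) ≤ ‖What‖ + μ i)]
end

section
/- Let K and M be symmetric real n×n matrices with K positive definite and M positive semidefinite, and ω > 0. Then the block matrix B = [[K, -ωM],[ωM, K + 2ωM]] admits the factorization B = [[I, -I],[0, I]] · [[K + ωM, 0],[ωM, K + ωM]] · [[I, I],[0, I]], and hence B is invertible. -/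
/-- the PRESB preconditioner factorization
`[[K, -ωM],[ωM, K+2ωM]] = [[I,-I],[0,I]]·[[K+ωM,0],[ωM,K+ωM]]·[[I,I],[0,I]]`,
hence its invertibility. -/
theorem stmt_11 {n : ℕ} (K M : Matrix (Fin n) (Fin n) ℝ)
    (hK : K.PosDef) (hM : M.PosSemidef) (ω : ℝ) (hω : 0 < ω)
    (B : Matrix (Fin n ⊕ Fin n) (Fin n ⊕ Fin n) ℝ)
    (hB : B = Matrix.fromBlocks K (-(ω • M)) (ω • M) (K + (2 * ω) • M)) :
    B = Matrix.fromBlocks (1 : Matrix (Fin n) (Fin n) ℝ) (-1) 0 1 *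
        Matrix.fromBlocks (K + ω • M) 0 (ω • M) (K + ω • M) *
        Matrix.fromBlocks 1 1 0 1 ∧
    IsUnit B := by
  have hMs : (ω • M).PosSemidef := by
    constructor
    · have h := hM.1
      rw [Matrix.IsHermitian, Matrix.conjTranspose_smul, star_trivial, h.eq]
    · intro x
      simpa [Matrix.smul_mulVec, dotProduct_smul, Finsupp.mul_sum, mul_assoc, mul_left_comm] using
        mul_nonneg hω.le (hM.2 x)
  have hKM : (K + ω • M).PosDef := hK.add_posSemidef hMs
  have hfac : B = Matrix.fromBlocks (1 : Matrix (Fin n) (Fin n) ℝ) (-1) 0 1 *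
        Matrix.fromBlocks (K + ω • M) 0 (ω • M) (K + ω • M) *
        Matrix.fromBlocks 1 1 0 1 := by
    rw [hB, Matrix.fromBlocks_multiply, Matrix.fromBlocks_multiply]
    congr 1 <;> simp <;> module
  refine ⟨hfac, ?_⟩
  rw [hfac]
  have h1 : IsUnit ((Matrix.fromBlocks (1 : Matrix (Fin n) (Fin n) ℝ) (-1) 0 1 : Matrix (Fin n ⊕ Fin n) (Fin n ⊕ Fin n) ℝ)) := by
    rw [Matrix.isUnit_iff_isUnit_det, Matrix.det_fromBlocks_zero₂₁]
    simp
  have h2 : IsUnit (Matrix.fromBlocks (K + ω • M) 0 (ω • M) (K + ω • M)) := by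
    rw [Matrix.isUnit_iff_isUnit_det, Matrix.det_fromBlocks_zero₁₂]
    exact (hKM.det_pos.ne'.isUnit).mul hKM.det_pos.ne'.isUnit
  have h3 : IsUnit ((Matrix.fromBlocks (1 : Matrix (Fin n) (Fin n) ℝ) 1 0 1 : Matrix (Fin n ⊕ Fin n) (Fin n ⊕ Fin n) ℝ)) := by
    rw [Matrix.isUnit_iff_isUnit_det, Matrix.det_fromBlocks_zero₂₁]
    simp
  exact (h1.mul h2).mul h3
end
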